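/- Let X be a complex Banach space, let Ω be a nonempty bounded open connected subset of ℂ, let T ∈ B₁(Ω), and let λ₀ ∈ Ω. Then the closed linear span of ⋃_{k≥1} ker((T − λ₀)^k) equals X. -/

import Mathlib

open Metric Set

section CDAux

variable {X : Type*} [NormedAddCommGroup X] [NormedSpace ℂ X] [CompleteSpace X]

set_option linter.unusedSectionVars false
set_option linter.unusedVariables false

/-- A surjective operator with one-dimensional kernel has a continuous right inverse. -/
lemma cd_exists_right_inverse (A : X →L[ℂ] X) (hsurj : Function.Surjective A)
    (hfr : Module.finrank ℂ (LinearMap.ker (A : X →ₗ[ℂ] X)) = 1) :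
    ∃ S : X →L[ℂ] X, ∀ y, A (S y) = y := by
  haveI : FiniteDimensional ℂ (LinearMap.ker (A : X →ₗ[ℂ] X)) := FiniteDimensional.of_finrank_eq_succ hfr
  obtain ⟨N, hNc, hcompl⟩ :=
    (Submodule.ClosedComplemented.of_finiteDimensional (LinearMap.ker (A : X →ₗ[ℂ] X))).exists_isClosed_isCompl
  haveI : CompleteSpace N := hNc.completeSpace_coe
  set A' : N →L[ℂ] X := A.comp N.subtypeL with hA'
  have hinj : LinearMap.ker (A' : N →ₗ[ℂ] X) = ⊥ := by
    rw [Submodule.eq_bot_iff]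
    rintro ⟨x, hxN⟩ hx
    have hxker : x ∈ LinearMap.ker (A : X →ₗ[ℂ] X) := by
      simpa [A', LinearMap.mem_ker] using hx
    have hmem : x ∈ (LinearMap.ker (A : X →ₗ[ℂ] X)) ⊓ N := ⟨hxker, hxN⟩
    rw [disjoint_iff.mp hcompl.disjoint] at hmem
    simpa using hmem
  have hsurj' : LinearMap.range (A' : N →ₗ[ℂ] X) = ⊤ := by
    rw [LinearMap.range_eq_top]
    intro y
    obtain ⟨x, hx⟩ := hsurj y
    have hxtop : x ∈ (LinearMap.ker (A : X →ₗ[ℂ] X)) ⊔ N := by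
      rw [codisjoint_iff.mp hcompl.codisjoint]; trivial
    obtain ⟨k, hk, n, hn, rfl⟩ := Submodule.mem_sup.mp hxtop
    refine ⟨⟨n, hn⟩, ?_⟩
    have hk0 : A k = 0 := hk
    simp only [A', ContinuousLinearMap.comp_apply]
    show A n = y
    rw [← hx, map_add, hk0, zero_add]
  set e := ContinuousLinearEquiv.ofBijective A' hinj hsurj'
  refine ⟨N.subtypeL.comp e.symm.toContinuousLinearMap, fun y => ?_⟩
  have : A' (e.symm y) = y :=
    ContinuousLinearEquiv.ofBijective_apply_symm_apply A' hinj hsurj' y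
  exact this

/-- If a closed subspace is proper, there is a nonzero continuous functional vanishing on it. -/
lemma cd_exists_functional (M : Submodule ℂ X) (hMc : IsClosed (M : Set X))
    (hM : M ≠ ⊤) :
    ∃ φ : X →L[ℂ] ℂ, (∀ y ∈ M, φ y = 0) ∧ φ ≠ 0 := by
  obtain ⟨x, hx⟩ : ∃ x, x ∉ M := by
    by_contra h
    push_neg at h
    exact hM (Submodule.eq_top_iff'.mpr h)
  have hconv : Convex ℝ (M : Set X) := (M.restrictScalars ℝ).convex
  obtain ⟨φ, u, hu1, hu2⟩ := RCLike.geometric_hahn_banach_closed_point (𝕜 := ℂ) hconv hMc hx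
  simp only [RCLike.re_to_complex] at hu1 hu2
  have hu0 : 0 < u := by simpa using hu1 0 M.zero_mem
  have hvan : ∀ y ∈ M, φ y = 0 := by
    intro y hy
    by_contra hφy
    have hns : 0 < Complex.normSq (φ y) := by
      simpa [Complex.normSq_pos] using hφy
    set t : ℝ := (u + 1) / Complex.normSq (φ y) with ht
    have hmem : ((t : ℂ) * (starRingEnd ℂ) (φ y)) • y ∈ M := M.smul_mem _ hy
    have := hu1 _ hmem
    rw [map_smul, smul_eq_mul] at this
    have hre : ((t : ℂ) * (starRingEnd ℂ) (φ y) * φ y).re = u + 1 := by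
      rw [mul_assoc, ← Complex.normSq_eq_conj_mul_self]
      simp [ht]
      field_simp
    rw [hre] at this
    linarith
  refine ⟨φ, hvan, fun h0 => ?_⟩
  have hφx : (φ x).re = 0 := by rw [h0]; simp
  rw [hφx] at hu2
  linarith

lemma cdU_ker (T : X →L[ℂ] X) {S : X →L[ℂ] X} {x₀ : X} {μ lam : ℂ}
    (hS : ∀ y, (T - μ • (1 : X →L[ℂ] X)) (S y) = y)
    (hx₀ : (T - μ • (1 : X →L[ℂ] X)) x₀ = 0) (hx₀ne : x₀ ≠ 0)
    (hn : ‖(lam - μ) • S‖ < 1) :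
    (T - lam • (1 : X →L[ℂ] X)) (Ring.inverse (1 - (lam - μ) • S) x₀) = 0 ∧
      Ring.inverse (1 - (lam - μ) • S) x₀ ≠ 0 := by
  set t : ℂ := lam - μ with htdef
  set B : X →L[ℂ] X := 1 - t • S with hBdef
  set u : X := Ring.inverse B x₀ with hudef
  have hunit : IsUnit B := isUnit_one_sub_of_norm_lt_one hn
  have hBinv : B * Ring.inverse B = 1 := Ring.mul_inverse_cancel B hunit
  have hBu : u - t • S u = x₀ := by
    have h := congrArg (fun C : X →L[ℂ] X => C x₀) hBinv
    simpa [hBdef, hudef, ContinuousLinearMap.mul_apply, ContinuousLinearMap.sub_apply,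
      ContinuousLinearMap.smul_apply, ContinuousLinearMap.one_apply] using h
  have hu_eq : u = x₀ + t • S u := by
    rw [← hBu]; abel
  have hAu : (T - μ • (1 : X →L[ℂ] X)) u = t • u := by
    conv_lhs => rw [hu_eq]
    rw [map_add, map_smul, hx₀, hS, zero_add]
  constructor
  · have hsplit : (T - lam • (1 : X →L[ℂ] X)) u
        = (T - μ • (1 : X →L[ℂ] X)) u - t • u := by
      simp only [ContinuousLinearMap.sub_apply, ContinuousLinearMap.smul_apply,
        ContinuousLinearMap.one_apply, htdef, sub_smul]
      abel
    rw [hsplit, hAu, sub_self]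
  · intro h0
    apply hx₀ne
    rw [← hBu, h0]
    simp

lemma cd_pow_mem (T : X →L[ℂ] X) {S : X →L[ℂ] X} {x₀ : X} {lam0 : ℂ}
    (hS : ∀ y, (T - lam0 • (1 : X →L[ℂ] X)) (S y) = y)
    (hx₀ : (T - lam0 • (1 : X →L[ℂ] X)) x₀ = 0) :
    ∀ n : ℕ, ((T - lam0 • (1 : X →L[ℂ] X)) ^ (n + 1)) ((S ^ n) x₀) = 0 := by
  intro n
  induction n with
  | zero => simpa using hx₀
  | succ n ih =>
    have h1 : (S ^ (n + 1)) x₀ = S ((S ^ n) x₀) := by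
      rw [pow_succ']; rfl
    have h2 : ((T - lam0 • (1 : X →L[ℂ] X)) ^ (n + 2))
        = ((T - lam0 • (1 : X →L[ℂ] X)) ^ (n + 1)) * (T - lam0 • (1 : X →L[ℂ] X)) :=
      pow_succ _ _
    rw [h1, h2, ContinuousLinearMap.mul_apply]
    have h3 : (T - lam0 • (1 : X →L[ℂ] X)) (S ((S ^ n) x₀)) = (S ^ n) x₀ := hS _
    rw [h3, ih]

lemma cdU_tsum (φ : X →L[ℂ] ℂ) (S : X →L[ℂ] X) (x₀ : X) {t : ℂ}
    (hn : ‖t • S‖ < 1) (hφ : ∀ n : ℕ, φ ((S ^ n) x₀) = 0) :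
    φ (Ring.inverse (1 - t • S) x₀) = 0 := by
  have hsum : Summable fun n : ℕ => (t • S) ^ n := summable_geometric_of_norm_lt_one hn
  have hinv : Ring.inverse (1 - t • S) = ∑' n : ℕ, (t • S) ^ n :=
    (geom_series_eq_inverse _ hn).symm
  set Φ : (X →L[ℂ] X) →L[ℂ] ℂ := φ.comp (ContinuousLinearMap.apply ℂ X x₀) with hΦdef
  have hΦ : ∀ B : X →L[ℂ] X, Φ B = φ (B x₀) := fun _ => rfl
  calc φ (Ring.inverse (1 - t • S) x₀) = Φ (∑' n : ℕ, (t • S) ^ n) := by rw [hΦ, hinv]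
    _ = ∑' n : ℕ, Φ ((t • S) ^ n) := Φ.map_tsum hsum
    _ = 0 := by
        have : ∀ n : ℕ, Φ ((t • S) ^ n) = 0 := by
          intro n
          rw [hΦ, smul_pow, ContinuousLinearMap.smul_apply, map_smul, hφ n, smul_zero]
        simp only [this, tsum_zero]

lemma cd_analytic (φ : X →L[ℂ] ℂ) (S : X →L[ℂ] X) (x₀ : X) {μ lam : ℂ}
    (hn : ‖(lam - μ) • S‖ < 1) :
    AnalyticAt ℂ (fun z : ℂ => φ (Ring.inverse (1 - (z - μ) • S) x₀)) lam := by
  have hf : AnalyticAt ℂ (fun z : ℂ => 1 - (z - μ) • S) lam :=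
    analyticAt_const.sub ((analyticAt_id.sub analyticAt_const).smul analyticAt_const)
  have hunit : IsUnit (1 - (lam - μ) • S) := isUnit_one_sub_of_norm_lt_one hn
  have hinv : AnalyticAt ℂ (Ring.inverse : (X →L[ℂ] X) → (X →L[ℂ] X)) (1 - (lam - μ) • S) := by
    have := analyticAt_inverse (𝕜 := ℂ) hunit.unit
    rwa [hunit.unit_spec] at this
  have h2 : AnalyticAt ℂ (fun z : ℂ => Ring.inverse (1 - (z - μ) • S)) lam := by
    have := AnalyticAt.comp (g := (Ring.inverse : (X →L[ℂ] X) → (X →L[ℂ] X)))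
      (f := fun z : ℂ => 1 - (z - μ) • S) hinv hf
    simpa [Function.comp_def] using this
  have h3 := ((φ.comp (ContinuousLinearMap.apply ℂ X x₀)).analyticAt _).comp h2
  simpa [Function.comp_def] using h3

end CDAux

/-- The Cowen–Douglas class `B₁(Ω)`: `Ω ⊆ σ(T)`; the closed linear span of
`⋃_{λ∈Ω} ker(T − λ)` is all of `X`; `T − λ` is surjective for every `λ ∈ Ω`; and
`dim ker(T − λ) = 1` for every `λ ∈ Ω`. -/
def MemCowenDouglasOne {X : Type*} [NormedAddCommGroup X] [NormedSpace ℂ X]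
    (Ω : Set ℂ) (T : X →L[ℂ] X) : Prop :=
  Ω ⊆ spectrum ℂ T ∧
  (Submodule.span ℂ
      (⋃ μ ∈ Ω, ((LinearMap.ker ((T - μ • (1 : X →L[ℂ] X) : X →L[ℂ] X) : X →ₗ[ℂ] X) : Submodule ℂ X) : Set X))
    ).topologicalClosure = ⊤ ∧
  (∀ μ ∈ Ω, Function.Surjective (T - μ • (1 : X →L[ℂ] X))) ∧
  (∀ μ ∈ Ω, Module.finrank ℂ (LinearMap.ker ((T - μ • (1 : X →L[ℂ] X) : X →L[ℂ] X) : X →ₗ[ℂ] X)) = 1)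

/-- If `Ω` is a nonempty bounded open connected subset of `ℂ`,
`T ∈ B₁(Ω)` and `λ₀ ∈ Ω`, then the closed linear span of `⋃_{k≥1} ker((T − λ₀)^k)`
equals `X`. -/
theorem closedSpan_ker_pow_eq_top_of_cowenDouglas
    (X : Type*) [NormedAddCommGroup X] [NormedSpace ℂ X] [CompleteSpace X]
    (Ω : Set ℂ) (hne : Ω.Nonempty) (hbd : Bornology.IsBounded Ω) (hop : IsOpen Ω)
    (hconn : IsConnected Ω)
    (T : X →L[ℂ] X) (hT : MemCowenDouglasOne Ω T) (lam0 : ℂ) (hlam0 : lam0 ∈ Ω) :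
    (Submodule.span ℂ
        (⋃ k : ℕ,
          ((LinearMap.ker (((T - lam0 • (1 : X →L[ℂ] X)) ^ (k + 1) : X →L[ℂ] X) : X →ₗ[ℂ] X) : Submodule ℂ X) : Set X))
      ).topologicalClosure = ⊤ := by
  by_contra hne_top
  set M : Submodule ℂ X := Submodule.span ℂ
      (⋃ k : ℕ,
        ((LinearMap.ker (((T - lam0 • (1 : X →L[ℂ] X)) ^ (k + 1) : X →L[ℂ] X) : X →ₗ[ℂ] X) : Submodule ℂ X) : Set X))
    with hMdef
  obtain ⟨φ, hφvan, hφne⟩ := cd_exists_functional M.topologicalClosure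
    M.isClosed_topologicalClosure hne_top
  -- φ vanishes on all generalized eigenvectors at lam0
  have hgen : ∀ (n : ℕ) (x : X), ((T - lam0 • (1 : X →L[ℂ] X)) ^ (n + 1)) x = 0 → φ x = 0 := by
    intro n x hx
    apply hφvan
    apply Submodule.le_topologicalClosure
    apply Submodule.subset_span
    exact Set.mem_iUnion.mpr ⟨n, hx⟩
  -- the vanishing property
  set P : ℂ → Prop := fun ν => ∀ x : X, (T - ν • (1 : X →L[ℂ] X)) x = 0 → φ x = 0 with hPdef
  -- local analytic sections
  have loc : ∀ μ ∈ Ω, ∃ r > 0, ball μ r ⊆ Ω ∧ ∃ g : ℂ → ℂ,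
      AnalyticOnNhd ℂ g (ball μ r) ∧
      (∀ lam ∈ ball μ r, (g lam = 0 → P lam) ∧ (P lam → g lam = 0)) ∧
      (μ = lam0 → ∀ lam ∈ ball μ r, g lam = 0) := by
    intro μ hμ
    obtain ⟨S, hS⟩ := cd_exists_right_inverse (T - μ • (1 : X →L[ℂ] X))
      (hT.2.2.1 μ hμ) (hT.2.2.2 μ hμ)
    haveI : Nontrivial (LinearMap.ker ((T - μ • (1 : X →L[ℂ] X) : X →L[ℂ] X) : X →ₗ[ℂ] X)) :=
      Module.nontrivial_of_finrank_eq_succ (hT.2.2.2 μ hμ)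
    obtain ⟨v, hv⟩ := exists_ne (0 : LinearMap.ker ((T - μ • (1 : X →L[ℂ] X) : X →L[ℂ] X) : X →ₗ[ℂ] X))
    have hx₀ : (T - μ • (1 : X →L[ℂ] X)) (v : X) = 0 := v.2
    have hx₀ne : (v : X) ≠ 0 := fun h => hv (Subtype.ext h)
    obtain ⟨ρ, hρ, hball⟩ := Metric.isOpen_iff.mp hop μ hμ
    refine ⟨min ρ (‖S‖ + 1)⁻¹, lt_min hρ (by positivity), ?_, ?_⟩
    · exact fun z hz => hball (mem_of_mem_of_subset hz (ball_subset_ball (min_le_left _ _)))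
    have hn : ∀ lam ∈ ball μ (min ρ (‖S‖ + 1)⁻¹), ‖(lam - μ) • S‖ < 1 := by
      intro lam hlam
      refine lt_of_le_of_lt (ContinuousLinearMap.opNorm_smul_le _ _) ?_
      have h1 : ‖lam - μ‖ < (‖S‖ + 1)⁻¹ := by
        have := mem_ball_iff_norm.mp hlam
        exact lt_of_lt_of_le this (min_le_right _ _)
      have hSpos : (0 : ℝ) < ‖S‖ + 1 := by positivity
      calc ‖lam - μ‖ * ‖S‖ ≤ ‖lam - μ‖ * (‖S‖ + 1) := by
            exact mul_le_mul_of_nonneg_left (by linarith) (norm_nonneg _)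
        _ < (‖S‖ + 1)⁻¹ * (‖S‖ + 1) := by
            exact mul_lt_mul_of_pos_right h1 hSpos
        _ = 1 := by field_simp
    refine ⟨fun z => φ (Ring.inverse (1 - (z - μ) • S) (v : X)), ?_, ?_, ?_⟩
    · exact fun lam hlam => cd_analytic φ S (v : X) (hn lam hlam)
    · intro lam hlam
      have hker := cdU_ker T hS hx₀ hx₀ne (hn lam hlam)
      constructor
      · intro hg x hx
        have hlamΩ : lam ∈ Ω :=
          hball (mem_of_mem_of_subset hlam (ball_subset_ball (min_le_left _ _)))
        have hfr : Module.finrank ℂ (LinearMap.ker ((T - lam • (1 : X →L[ℂ] X) : X →L[ℂ] X) : X →ₗ[ℂ] X)) = 1 :=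
          hT.2.2.2 lam hlamΩ
        set u : X := Ring.inverse (1 - (lam - μ) • S) (v : X) with hudef
        have humem : u ∈ LinearMap.ker ((T - lam • (1 : X →L[ℂ] X) : X →L[ℂ] X) : X →ₗ[ℂ] X) := hker.1
        have huvne : (⟨u, humem⟩ : LinearMap.ker ((T - lam • (1 : X →L[ℂ] X) : X →L[ℂ] X) : X →ₗ[ℂ] X)) ≠ 0 :=
          fun h => hker.2 (by simpa using congrArg Subtype.val h)
        obtain ⟨c, hc⟩ := (finrank_eq_one_iff_of_nonzero' _ huvne).mp hfr ⟨x, hx⟩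
        have hcx : c • u = x := congrArg Subtype.val hc
        rw [← hcx, map_smul, show φ u = 0 from hg, smul_zero]
      · intro hP
        exact hP _ hker.1
    · rintro rfl lam hlam
      exact cdU_tsum φ S (v : X) (hn lam hlam)
        (fun n => hgen n _ (cd_pow_mem T hS hx₀ n))
  -- the set where the vanishing property holds on a neighborhood
  set U : Set ℂ := {ν : ℂ | ∃ ε > 0, ball ν ε ⊆ {z | P z}} with hUdef
  have hUopen : IsOpen U := by
    rw [Metric.isOpen_iff]
    rintro ν ⟨ε, hε, hsub⟩
    refine ⟨ε, hε, fun ν' hν' => ?_⟩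
    refine ⟨ε - dist ν' ν, by simpa [sub_pos] using hν', ?_⟩
    refine Subset.trans (ball_subset_ball' ?_) hsub
    linarith [le_of_eq (rfl : dist ν' ν = dist ν' ν)]
  -- base point
  have hlam0U : lam0 ∈ U := by
    obtain ⟨r, hr, hballΩ, g, hg_an, hg_iff, hg_base⟩ := loc lam0 hlam0
    exact ⟨r, hr, fun lam hlam => (hg_iff lam hlam).1 (hg_base rfl lam hlam)⟩
  -- the key clopen property
  have key : ∀ μ ∈ Ω, μ ∈ closure U → μ ∈ U := by
    intro μ hμ hcl
    obtain ⟨r, hr, hballΩ, g, hg_an, hg_iff, _⟩ := loc μ hμ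
    obtain ⟨ν, hν1, hν2⟩ := mem_closure_iff.mp hcl (ball μ r) isOpen_ball (mem_ball_self hr)
    obtain ⟨ε, hε, hsubP⟩ := hν2
    have hev : g =ᶠ[nhds ν] 0 := by
      apply Filter.eventuallyEq_of_mem
        ((isOpen_ball.inter isOpen_ball).mem_nhds ⟨mem_ball_self hε, hν1⟩)
      rintro lam ⟨hlam1, hlam2⟩
      exact (hg_iff lam hlam2).2 (hsubP hlam1)
    have hzero : EqOn g 0 (ball μ r) :=
      hg_an.eqOn_zero_of_preconnected_of_eventuallyEq_zero
        (convex_ball μ r).isPreconnected hν1 hev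
    exact ⟨r, hr, fun lam hlam => (hg_iff lam hlam).1 (hzero hlam)⟩
  -- connectedness argument
  have hcover : Ω ⊆ U ∪ (closure U)ᶜ := by
    intro μ hμ
    by_cases h : μ ∈ closure U
    · exact Or.inl (key μ hμ h)
    · exact Or.inr h
  have hΩU : Ω ⊆ U := by
    by_contra hnsub
    have hV : (Ω ∩ (closure U)ᶜ).Nonempty := by
      obtain ⟨μ, hμΩ, hμU⟩ := not_subset.mp hnsub
      refine ⟨μ, hμΩ, fun hcl => hμU (key μ hμΩ hcl)⟩
    obtain ⟨z, hzΩ, hzU, hzV⟩ := hconn.isPreconnected U (closure U)ᶜ hUopen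
      isClosed_closure.isOpen_compl hcover ⟨lam0, hlam0, hlam0U⟩ hV
    exact hzV (subset_closure hzU)
  -- conclude
  have hPall : ∀ μ ∈ Ω, P μ := by
    intro μ hμ
    obtain ⟨ε, hε, hsub⟩ := hΩU hμ
    exact hsub (mem_ball_self hε)
  have hspan : Submodule.span ℂ
      (⋃ μ ∈ Ω, ((LinearMap.ker ((T - μ • (1 : X →L[ℂ] X) : X →L[ℂ] X) : X →ₗ[ℂ] X) : Submodule ℂ X) : Set X))
      ≤ LinearMap.ker (φ : X →ₗ[ℂ] ℂ) := by
    rw [Submodule.span_le]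
    intro x hx
    obtain ⟨μ, hμ, hxker⟩ := by simpa using hx
    exact hPall μ hμ x hxker
  have hclos := Submodule.topologicalClosure_minimal _ hspan (ContinuousLinearMap.isClosed_ker φ)
  rw [hT.2.1] at hclos
  apply hφne
  ext x
  exact hclos (Submodule.mem_top (x := x))
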